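/- Let C > 0, R > 0 and T0 ≥ 0. Suppose v1, v2 : ℝ → ℝ are differentiable and satisfy C·v1'(t) = -(v1(t) - v2(t))/R and C·v2'(t) = (v1(t) - v2(t))/R for all t. Then the energy received by the second capacitor, ΔE_receive := (C/2)·(v2(T0)² - v2(0)²), equals (1/8)·C·(v1(0) - v2(0))·(1 - exp(-2·T0/(C·R)))·((v1(0) + 3·v2(0)) - (v1(0) - v2(0))·exp(-2·T0/(C·R))). -/

import Mathlib

theorem router_router_energy_received
    (C R T0 : ℝ) (hC : 0 < C) (hR : 0 < R) (hT0 : 0 ≤ T0)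
    (v1 v2 : ℝ → ℝ) (hd1 : Differentiable ℝ v1) (hd2 : Differentiable ℝ v2)
    (h1 : ∀ t, C * deriv v1 t = -(v1 t - v2 t) / R)
    (h2 : ∀ t, C * deriv v2 t = (v1 t - v2 t) / R) :
    (C / 2) * ((v2 T0)^2 - (v2 0)^2) =
      (1/8) * C * (v1 0 - v2 0) * (1 - Real.exp (-2 * T0 / (C * R))) *
        ((v1 0 + 3 * v2 0) - (v1 0 - v2 0) * Real.exp (-2 * T0 / (C * R))) := by
  have hC0 : C ≠ 0 := ne_of_gt hC
  have hR0 : R ≠ 0 := ne_of_gt hR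
  set k : ℝ := 2 / (C * R) with hk
  have hdv1 : ∀ t, deriv v1 t = -(v1 t - v2 t) / (C * R) := by
    intro t
    field_simp
    have := h1 t
    field_simp at this
    linarith
  have hdv2 : ∀ t, deriv v2 t = (v1 t - v2 t) / (C * R) := by
    intro t
    field_simp
    have := h2 t
    field_simp at this
    linarith
  -- sum is constant
  have hsum : v1 T0 + v2 T0 = v1 0 + v2 0 := by
    have hds : ∀ t, deriv (fun t => v1 t + v2 t) t = 0 := by
      intro t
      rw [deriv_fun_add (hd1 t) (hd2 t), hdv1, hdv2]
      ring
    have := is_const_of_deriv_eq_zero (hd1.add hd2) hds T0 0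
    simpa using this
  -- difference times exp(k t) is constant
  have hcr0 : C * R ≠ 0 := mul_ne_zero hC0 hR0
  have hdiff : (v1 T0 - v2 T0) * Real.exp (k * T0) = v1 0 - v2 0 := by
    have hf : Differentiable ℝ (fun t => (v1 t - v2 t) * Real.exp (k * t)) := by
      exact (hd1.sub hd2).mul ((differentiable_const k).mul differentiable_id).exp
    have hdf : ∀ t, deriv (fun t => (v1 t - v2 t) * Real.exp (k * t)) t = 0 := by
      intro t
      have he : HasDerivAt (fun t => Real.exp (k * t)) (Real.exp (k * t) * k) t := by
        simpa using ((hasDerivAt_id t).const_mul k).exp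
      have hv : HasDerivAt (fun t => v1 t - v2 t) (deriv v1 t - deriv v2 t) t :=
        ((hd1 t).hasDerivAt).sub ((hd2 t).hasDerivAt)
      have := (hv.fun_mul he).deriv
      rw [this, hdv1, hdv2, hk]
      field_simp
      ring
    have := is_const_of_deriv_eq_zero hf hdf T0 0
    simpa using this
  have he0 : Real.exp (k * T0) ≠ 0 := Real.exp_ne_zero _
  have hexp : Real.exp (-2 * T0 / (C * R)) = (Real.exp (k * T0))⁻¹ := by
    rw [← Real.exp_neg]
    congr 1
    rw [hk]
    field_simp
  have hv2T0 : v2 T0 = ((v1 0 + v2 0) - (v1 0 - v2 0) * (Real.exp (k * T0))⁻¹) / 2 := by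
    have h2' : v1 T0 - v2 T0 = (v1 0 - v2 0) * (Real.exp (k * T0))⁻¹ := by
      field_simp
      linarith [hdiff]
    field_simp
    linear_combination Real.exp (k * T0) * hsum - hdiff
  rw [hexp, hv2T0]
  field_simp
  ring
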